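/- Let G be a graph on [n] and T ⊆ [n], and let G_1, ..., G_c be the connected components of the induced subgraph of G on [n] \ T. Then the ideal P_T(G) = ({x_i, y_i : i ∈ T}) + J_{G̃_1} + ... + J_{G̃_c} is a prime ideal of S = K[x_1,...,x_n,y_1,...,y_n], where G̃_k denotes the complete graph on the vertex set of G_k. -/

import Mathlib

open MvPolynomial

noncomputable section

variable {K : Type} [Field K] {σ : Type}

/-- `p` is homogeneous of degree `z : ℤ` (the zero polynomial is homogeneous of any degree). -/
def IsHomZ (p : MvPolynomial σ K) (z : ℤ) : Prop :=
  ∀ d ∈ p.support, (d.sum fun _ e => (e : ℤ)) = z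

/-- Homogeneous elements of degree `z` of the polynomial ring, as an additive subgroup. -/
def polyGr (K : Type) [Field K] (σ : Type) (z : ℤ) :
    AddSubgroup (MvPolynomial σ K) where
  carrier := {p | IsHomZ p z}
  zero_mem' := by intro d hd; simp at hd
  add_mem' := by
    classical
    intro p q hp hq d hd
    rcases Finset.mem_union.mp (MvPolynomial.support_add hd) with h | h
    · exact hp d h
    · exact hq d h
  neg_mem' := by
    intro p hp d hd
    exact hp d (by simpa using hd)

/-- An element of a graded free module `B →₀ S`, with generator `b` in degree `dg b`,
is homogeneous of degree `z`. -/
def FinsuppHomog {B : Type} (dg : B → ℤ) (x : B →₀ MvPolynomial σ K) (z : ℤ) : Prop :=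
  ∀ b, IsHomZ (x b) (z - dg b)

/-- A graded free resolution of a module `M` over the polynomial ring,
with degree-`0` (i.e. graded) differentials; the grading of `M` is recorded by
the family of additive subgroups `gr`. -/
structure GradedFreeResolution {M : Type} [AddCommGroup M]
    [Module (MvPolynomial σ K) M] (gr : ℤ → AddSubgroup M) where
  B : ℕ → Type
  dg : ∀ i, B i → ℤ
  φ : ∀ i, (B (i + 1) →₀ MvPolynomial σ K) →ₗ[MvPolynomial σ K]
        (B i →₀ MvPolynomial σ K)
  π : (B 0 →₀ MvPolynomial σ K) →ₗ[MvPolynomial σ K] M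
  φ_graded : ∀ i b, FinsuppHomog (dg i) (φ i (Finsupp.single b 1)) (dg (i + 1) b)
  π_graded : ∀ b, π (Finsupp.single b 1) ∈ gr (dg 0 b)
  π_surj : Function.Surjective π
  exact0 : Function.Exact (φ 0) π
  exact : ∀ i, Function.Exact (φ (i + 1)) (φ i)

/-- Castelnuovo–Mumford regularity of a graded module, defined as the infimum over
all graded free resolutions of the largest twist: `reg M = min_F max {deg b - i}`;
the minimal free resolution realizes this infimum. -/
def moduleReg (K : Type) [Field K] (σ : Type) {M : Type} [AddCommGroup M]
    [Module (MvPolynomial σ K) M] (gr : ℤ → AddSubgroup M) : ℤ :=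
  sInf {r : ℤ | ∃ F : GradedFreeResolution (K := K) (σ := σ) gr,
    ∀ i b, F.dg i b ≤ r + i}

/-- Grading on (the underlying module of) a homogeneous ideal. -/
def idealGr (I : Ideal (MvPolynomial σ K)) (z : ℤ) : AddSubgroup I where
  carrier := {x | IsHomZ (x : MvPolynomial σ K) z}
  zero_mem' := by intro d hd; simp at hd
  add_mem' := by
    classical
    intro p q hp hq d hd
    rcases Finset.mem_union.mp (MvPolynomial.support_add hd) with h | h
    · exact hp d h
    · exact hq d h
  neg_mem' := by
    intro p hp d hd
    exact hp d (by simpa using hd)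

/-- Grading on the quotient `S/I` of the polynomial ring by a homogeneous ideal. -/
def quotGr (I : Ideal (MvPolynomial σ K)) (z : ℤ) :
    AddSubgroup (MvPolynomial σ K ⧸ I) :=
  (polyGr K σ z).map (Ideal.Quotient.mk I).toAddMonoidHom

/-- The Castelnuovo–Mumford regularity `reg I` of a homogeneous ideal. -/
def idealReg (I : Ideal (MvPolynomial σ K)) : ℤ :=
  moduleReg K σ (idealGr I)

/-- The Castelnuovo–Mumford regularity `reg S/I`. -/
def quotReg (I : Ideal (MvPolynomial σ K)) : ℤ :=
  moduleReg K σ (quotGr I)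

/-- The binomial edge ideal of a graph `G` on `[n]`, in
`S = K[x_1, …, x_n, y_1, …, y_n]` where `x_i = X (inl i)` and `y_i = X (inr i)`. -/
def beIdeal (K : Type) [Field K] {n : ℕ} (G : SimpleGraph (Fin n)) :
    Ideal (MvPolynomial (Fin n ⊕ Fin n) K) :=
  Ideal.span {f | ∃ i j, G.Adj i j ∧
    f = X (Sum.inl i) * X (Sum.inr j) - X (Sum.inl j) * X (Sum.inr i)}

/-- The initial ideal of `I` with respect to a monomial order `m`: the ideal generated
by the leading monomials of the nonzero elements of `I`. -/
def initialIdeal (m : MonomialOrder σ) (I : Ideal (MvPolynomial σ K)) :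
    Ideal (MvPolynomial σ K) :=
  Ideal.span {g | ∃ f ∈ I, ∃ d ∈ f.support,
    (∀ d' ∈ f.support, m.toSyn d' ≤ m.toSyn d) ∧ g = monomial d (1 : K)}

/-- A finite injective resolution `0 → M → I⁰ → I¹ → ⋯ → Iⁿ → 0`. -/
structure FiniteInjectiveResolution (R : Type) [CommRing R] (M : Type) [AddCommGroup M]
    [Module R M] where
  n : ℕ
  I : ℕ → Type
  acg : ∀ i, AddCommGroup (I i)
  mod : ∀ i, @Module R (I i) _ (acg i).toAddCommMonoid
  inj : ∀ i, @Module.Injective R _ (I i) (acg i) (mod i)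
  ι : @LinearMap R R _ _ (RingHom.id R) M (I 0) _ (acg 0).toAddCommMonoid _ (mod 0)
  d : ∀ i, @LinearMap R R _ _ (RingHom.id R) (I i) (I (i + 1))
        (acg i).toAddCommMonoid (acg (i + 1)).toAddCommMonoid (mod i) (mod (i + 1))
  ι_inj : Function.Injective ι
  ex0 : Function.Exact ι (d 0)
  ex : ∀ i, Function.Exact (d i) (d (i + 1))
  bounded : ∀ i > n, ∀ x : I i, x = 0

/-- A (finite-dimensional) Noetherian ring is Gorenstein iff it has finite injective
dimension over itself. -/
def IsGorensteinRing (R : Type) [CommRing R] : Prop :=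
  IsNoetherianRing R ∧ Nonempty (FiniteInjectiveResolution R R)

end

/-- The graph `G` restricted to the edges avoiding `T` (so that, for `i, j ∉ T`,
reachability in it is the same as lying in the same connected component of the
induced subgraph of `G` on the complement of `T`). -/

def restrictOutside {n : ℕ} (G : SimpleGraph (Fin n)) (T : Set (Fin n)) :
    SimpleGraph (Fin n) where
  Adj a b := G.Adj a b ∧ a ∉ T ∧ b ∉ T
  symm := ⟨fun a b h => ⟨h.1.symm, h.2.2, h.2.1⟩⟩
  loopless := ⟨fun a h => G.loopless.irrefl a h.1⟩

namespace Stmt12Aux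

open Classical

noncomputable section

variable (K : Type) [Field K] {n : ℕ} (G : SimpleGraph (Fin n)) (T : Set (Fin n))

abbrev CC := (restrictOutside G T).ConnectedComponent

def cc (i : Fin n) : CC G T := (restrictOutside G T).connectedComponentMk i

instance : Finite (CC G T) := Quot.finite _

abbrev σR := Fin n ⊕ (CC G T ⊕ CC G T)

def g : Fin n ⊕ Fin n → MvPolynomial (σR G T) K
  | .inl i => if i ∈ T then 0 else X (.inl i) * X (.inr (.inl (cc G T i)))
  | .inr i => if i ∈ T then 0 else X (.inl i) * X (.inr (.inr (cc G T i)))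

def φ : MvPolynomial (Fin n ⊕ Fin n) K →ₐ[K] MvPolynomial (σR G T) K := aeval (g K G T)

def Good (d : Fin n ⊕ Fin n →₀ ℕ) : Prop := ∀ i ∈ T, d (.inl i) = 0 ∧ d (.inr i) = 0

def E (d : Fin n ⊕ Fin n →₀ ℕ) : σR G T →₀ ℕ :=
  Finsupp.equivFunOnFinite.symm fun s =>
    match s with
    | .inl i => d (.inl i) + d (.inr i)
    | .inr (.inl c) => ∑ i : Fin n, if cc G T i = c then d (.inl i) else 0
    | .inr (.inr c) => ∑ i : Fin n, if cc G T i = c then d (.inr i) else 0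

def P : Ideal (MvPolynomial (Fin n ⊕ Fin n) K) :=
  Ideal.span
    ({f | ∃ i ∈ T, f = X (Sum.inl i) ∨ f = X (Sum.inr i)} ∪
     {f | ∃ i j : Fin n, i ∉ T ∧ j ∉ T ∧ i ≠ j ∧ (restrictOutside G T).Reachable i j ∧
        f = X (Sum.inl i) * X (Sum.inr j) - X (Sum.inl j) * X (Sum.inr i)})

variable {G T}

lemma E_apply_inl (d : Fin n ⊕ Fin n →₀ ℕ) (i : Fin n) :
    E G T d (.inl i) = d (.inl i) + d (.inr i) :=
  rfl

lemma E_apply_U (d : Fin n ⊕ Fin n →₀ ℕ) (c : CC G T) :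
    E G T d (.inr (.inl c)) = ∑ i : Fin n, if cc G T i = c then d (.inl i) else 0 :=
  rfl

lemma E_apply_W (d : Fin n ⊕ Fin n →₀ ℕ) (c : CC G T) :
    E G T d (.inr (.inr c)) = ∑ i : Fin n, if cc G T i = c then d (.inr i) else 0 :=
  rfl

lemma sum_cc_eq (c : CC G T) (f : Fin n → ℕ) (i : Fin n) (hf : ∀ j, j ≠ i → f j = 0) :
    (∑ j : Fin n, if cc G T j = c then f j else 0) = if cc G T i = c then f i else 0 := by
  rw [Finset.sum_eq_single i]
  · intro b _ hb; simp [hf b hb]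
  · simp

lemma E_add (d d' : Fin n ⊕ Fin n →₀ ℕ) : E G T (d + d') = E G T d + E G T d' := by
  ext s
  rcases s with i | c | c
  · simp only [E_apply_inl, Finsupp.add_apply]; ring
  · simp only [E_apply_U, Finsupp.add_apply, ← Finset.sum_add_distrib]
    apply Finset.sum_congr rfl; intro i _; split <;> simp
  · simp only [E_apply_W, Finsupp.add_apply, ← Finset.sum_add_distrib]
    apply Finset.sum_congr rfl; intro i _; split <;> simp

lemma E_single_inl (i : Fin n) (k : ℕ) :
    E G T (Finsupp.single (Sum.inl i) k) =
      Finsupp.single (Sum.inl i) k + Finsupp.single (Sum.inr (Sum.inl (cc G T i))) k := by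
  ext s
  rcases s with j | c | c
  · simp [E_apply_inl, Finsupp.single_apply, Finsupp.add_apply]
  · rw [E_apply_U, sum_cc_eq c _ i (by intro j hj; simp [Finsupp.single_apply, Ne.symm hj])]
    simp [Finsupp.single_apply, Finsupp.add_apply]
  · rw [E_apply_W, sum_cc_eq c _ i (by intro j hj; simp [Finsupp.single_apply])]
    simp [Finsupp.single_apply, Finsupp.add_apply]

lemma E_single_inr (i : Fin n) (k : ℕ) :
    E G T (Finsupp.single (Sum.inr i) k) =
      Finsupp.single (Sum.inl i) k + Finsupp.single (Sum.inr (Sum.inr (cc G T i))) k := by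
  ext s
  rcases s with j | c | c
  · simp [E_apply_inl, Finsupp.single_apply, Finsupp.add_apply]
  · rw [E_apply_U, sum_cc_eq c _ i (by intro j hj; simp [Finsupp.single_apply])]
    simp [Finsupp.single_apply, Finsupp.add_apply]
  · rw [E_apply_W, sum_cc_eq c _ i (by intro j hj; simp [Finsupp.single_apply, Ne.symm hj])]
    simp [Finsupp.single_apply, Finsupp.add_apply]

lemma E_zero : E G T 0 = 0 := by
  ext s; rcases s with i | c | c <;> simp [E_apply_inl, E_apply_U, E_apply_W]

lemma phi_monomial_good (d : Fin n ⊕ Fin n →₀ ℕ) (hd : Good T d) :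
    φ K G T (monomial d 1) = monomial (E G T d) 1 := by
  induction d using Finsupp.induction with
  | zero => simp [φ, E_zero]
  | single_add s k d hsd hk ih =>
    have hGd : Good T d := by
      intro t ht
      have h1 := (hd t ht).1
      have h2 := (hd t ht).2
      simp only [Finsupp.add_apply, Nat.add_eq_zero] at h1 h2
      exact ⟨h1.2, h2.2⟩
    have hmul : (monomial (Finsupp.single s k + d) (1:K)) =
        monomial (Finsupp.single s k) 1 * monomial d 1 := by
      rw [monomial_mul, one_mul]
    rw [hmul, map_mul, ih hGd, E_add, ← X_pow_eq_monomial, map_pow]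
    rcases s with i | i
    · have hiT : i ∉ T := by
        intro ht
        have := (hd i ht).1
        simp [Finsupp.add_apply, Finsupp.single_apply, hk] at this
      rw [E_single_inl]
      show (φ K G T) (X (Sum.inl i)) ^ k * _ = _
      rw [show (φ K G T) (X (Sum.inl i)) = g K G T (Sum.inl i) from aeval_X _ _]
      simp only [g, if_neg hiT]
      rw [mul_pow, X_pow_eq_monomial, X_pow_eq_monomial, monomial_mul, monomial_mul]
      simp
    · have hiT : i ∉ T := by
        intro ht
        have := (hd i ht).2
        simp [Finsupp.add_apply, Finsupp.single_apply, hk] at this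
      rw [E_single_inr]
      show (φ K G T) (X (Sum.inr i)) ^ k * _ = _
      rw [show (φ K G T) (X (Sum.inr i)) = g K G T (Sum.inr i) from aeval_X _ _]
      simp only [g, if_neg hiT]
      rw [mul_pow, X_pow_eq_monomial, X_pow_eq_monomial, monomial_mul, monomial_mul]
      simp

lemma phi_monomial_good' (d : Fin n ⊕ Fin n →₀ ℕ) (hd : Good T d) (c : K) :
    φ K G T (monomial d c) = monomial (E G T d) c := by
  have : (monomial d c : MvPolynomial (Fin n ⊕ Fin n) K) = C c * monomial d 1 := by
    rw [C_mul_monomial, mul_one]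
  rw [this, map_mul, phi_monomial_good K d hd]
  rw [show φ K G T (C c) = C c from by simp [φ, algebraMap_eq]]
  rw [C_mul_monomial, mul_one]

lemma bad_coord (d : Fin n ⊕ Fin n →₀ ℕ) (hd : ¬ Good T d) :
    ∃ s, d s ≠ 0 ∧ (∃ i ∈ T, s = Sum.inl i ∨ s = Sum.inr i) := by
  rw [Good] at hd
  push_neg at hd
  obtain ⟨i, hiT, h⟩ := hd
  by_cases h1 : d (Sum.inl i) = 0
  · exact ⟨Sum.inr i, h h1, i, hiT, Or.inr rfl⟩
  · exact ⟨Sum.inl i, h1, i, hiT, Or.inl rfl⟩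

lemma phi_monomial_bad (d : Fin n ⊕ Fin n →₀ ℕ) (hd : ¬ Good T d) (r : K) :
    φ K G T (monomial d r) = 0 := by
  obtain ⟨s, hds, i, hiT, hsi⟩ := bad_coord d hd
  have hgs : g K G T s = 0 := by
    rcases hsi with rfl | rfl <;> simp [g, hiT]
  rw [φ, aeval_monomial]
  have : (d.prod fun a k => g K G T a ^ k) = 0 :=
    Finset.prod_eq_zero (Finsupp.mem_support_iff.mpr hds) (by show g K G T s ^ d s = 0; rw [hgs]; exact zero_pow hds)
  rw [this, mul_zero]

lemma monomial_bad_mem (d : Fin n ⊕ Fin n →₀ ℕ) (hd : ¬ Good T d) (r : K) :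
    monomial d r ∈ P K G T := by
  obtain ⟨s, hds, i, hiT, hsi⟩ := bad_coord d hd
  have hX : (X s : MvPolynomial (Fin n ⊕ Fin n) K) ∈ P K G T := by
    apply Ideal.subset_span
    left
    exact ⟨i, hiT, by rcases hsi with rfl | rfl; exacts [Or.inl rfl, Or.inr rfl]⟩
  have hd1 : Finsupp.single s 1 + (d - Finsupp.single s 1) = d := by
    ext a
    rcases eq_or_ne a s with rfl | ha
    · simp only [Finsupp.add_apply, Finsupp.tsub_apply, Finsupp.single_apply]
      simp only [if_pos rfl, if_true]
      omega
    · simp [Finsupp.add_apply, Finsupp.tsub_apply, Finsupp.single_apply, Ne.symm ha]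
  have : (monomial d r : MvPolynomial (Fin n ⊕ Fin n) K) =
      X s * monomial (d - Finsupp.single s 1) r := by
    rw [X, monomial_mul, one_mul, hd1]
  rw [this]
  exact Ideal.mul_mem_right _ _ hX

lemma P_le_ker : P K G T ≤ RingHom.ker (φ K G T).toRingHom := by
  rw [P, Ideal.span_le]
  rintro f (⟨i, hiT, rfl | rfl⟩ | ⟨i, j, hiT, hjT, hij, hreach, rfl⟩)
  · simp [RingHom.mem_ker, φ, g, hiT]
  · simp [RingHom.mem_ker, φ, g, hiT]
  · have hcc : cc G T i = cc G T j := SimpleGraph.ConnectedComponent.sound hreach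
    simp only [SetLike.mem_coe, RingHom.mem_ker, AlgHom.toRingHom_eq_coe, RingHom.coe_coe,
      map_sub, map_mul, φ, aeval_X, g, if_neg hiT, if_neg hjT, hcc]
    ring


def meas (d d' : Fin n ⊕ Fin n →₀ ℕ) : ℕ :=
  ∑ i : Fin n, ((d (Sum.inl i) : ℤ) - d' (Sum.inl i)).natAbs

lemma meas_comm (d d' : Fin n ⊕ Fin n →₀ ℕ) : meas d d' = meas d' d := by
  unfold meas
  apply Finset.sum_congr rfl
  intro i _
  omega

lemma swap_step (d d' : Fin n ⊕ Fin n →₀ ℕ) (hd : Good T d) (hd' : Good T d')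
    (hE : E G T d = E G T d') (i : Fin n) (hi : d' (Sum.inl i) < d (Sum.inl i)) :
    ∃ d₁, Good T d₁ ∧ E G T d₁ = E G T d ∧ meas d₁ d' + 2 = meas d d' ∧
      (monomial d (1:K) - monomial d₁ 1) ∈ P K G T := by
  have hsum : (∑ k : Fin n, if cc G T k = cc G T i then d (Sum.inl k) else 0) =
      ∑ k : Fin n, if cc G T k = cc G T i then d' (Sum.inl k) else 0 := by
    have := congrArg (fun e => e (Sum.inr (Sum.inl (cc G T i)))) hE
    simpa [E_apply_U] using this
  have hj : ∃ j, cc G T j = cc G T i ∧ d (Sum.inl j) < d' (Sum.inl j) := by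
    by_contra h
    push_neg at h
    have hlt : (∑ k : Fin n, if cc G T k = cc G T i then d' (Sum.inl k) else 0) <
        ∑ k : Fin n, if cc G T k = cc G T i then d (Sum.inl k) else 0 := by
      apply Finset.sum_lt_sum
      · intro k _
        split
        · exact h k ‹_›
        · exact le_rfl
      · exact ⟨i, Finset.mem_univ i, by simp [hi]⟩
    omega
  obtain ⟨j, hccj, hj⟩ := hj
  have hij : i ≠ j := by intro h; rw [h] at hi; omega
  have hiT : i ∉ T := fun ht => by have := (hd i ht).1; omega
  have hjT : j ∉ T := fun ht => by have := (hd' j ht).1; omega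
  have hEj : d (Sum.inl j) + d (Sum.inr j) = d' (Sum.inl j) + d' (Sum.inr j) := by
    have := congrArg (fun e => e (Sum.inl j)) hE
    simpa [E_apply_inl] using this
  have hbj : 0 < d (Sum.inr j) := by omega
  set u : Fin n ⊕ Fin n →₀ ℕ :=
    Finsupp.single (Sum.inl i) 1 + Finsupp.single (Sum.inr j) 1 with hu
  set v : Fin n ⊕ Fin n →₀ ℕ :=
    Finsupp.single (Sum.inl j) 1 + Finsupp.single (Sum.inr i) 1 with hv
  set d₀ : Fin n ⊕ Fin n →₀ ℕ := d - u with hd0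
  have hdu : d₀ + u = d := by
    ext a
    have hua : u a ≤ d a := by
      rcases eq_or_ne a (Sum.inl i) with rfl | h1
      · simp [hu, Finsupp.add_apply, Finsupp.single_apply, Sum.inl.injEq, hij]
        omega
      · rcases eq_or_ne a (Sum.inr j) with rfl | h2
        · simp [hu, Finsupp.add_apply, Finsupp.single_apply, Sum.inr.injEq, Ne.symm hij]
          omega
        · simp [hu, Finsupp.add_apply, Finsupp.single_apply, Ne.symm h1, Ne.symm h2]
    simp only [hd0, Finsupp.add_apply, Finsupp.tsub_apply]
    omega
  set d₁ : Fin n ⊕ Fin n →₀ ℕ := d₀ + v with hd1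
  have hd0le : ∀ a, d₀ a ≤ d a := by
    intro a
    simp only [hd0, Finsupp.tsub_apply]
    omega
  refine ⟨d₁, ?_, ?_, ?_, ?_⟩
  · intro t ht
    have h1 := (hd t ht).1
    have h2 := (hd t ht).2
    have hti : t ≠ i := fun h => hiT (h ▸ ht)
    have htj : t ≠ j := fun h => hjT (h ▸ ht)
    constructor
    · have := hd0le (Sum.inl t)
      simp only [hd1, hv, Finsupp.add_apply, Finsupp.single_apply]
      simp [Sum.inl.injEq, Ne.symm hti, Ne.symm htj]
      omega
    · have := hd0le (Sum.inr t)
      simp only [hd1, hv, Finsupp.add_apply, Finsupp.single_apply]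
      simp [Sum.inr.injEq, Ne.symm hti, Ne.symm htj]
      omega
  · have hEuv : E G T u = E G T v := by
      rw [hu, hv, E_add, E_add, E_single_inl, E_single_inl, E_single_inr, E_single_inr, hccj]
      abel
    rw [hd1, E_add, ← hEuv, ← E_add, hdu]
  · -- measure
    have e1 : d₁ (Sum.inl i) + 1 = d (Sum.inl i) := by
      have := congrArg (fun w : Fin n ⊕ Fin n →₀ ℕ => w (Sum.inl i)) hdu
      simp only [hd1, hu, hv, Finsupp.add_apply, Finsupp.single_apply] at this ⊢
      simp only [Sum.inl.injEq, Sum.inr.injEq, if_pos rfl, if_true] at this ⊢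
      simp [hij, Ne.symm hij] at this ⊢
      omega
    have e2 : d₁ (Sum.inl j) = d (Sum.inl j) + 1 := by
      have := congrArg (fun w : Fin n ⊕ Fin n →₀ ℕ => w (Sum.inl j)) hdu
      simp only [hd1, hu, hv, Finsupp.add_apply, Finsupp.single_apply] at this ⊢
      simp only [Sum.inl.injEq, Sum.inr.injEq, if_pos rfl, if_true] at this ⊢
      simp [hij, Ne.symm hij] at this ⊢
      omega
    have e3 : ∀ k : Fin n, k ≠ i → k ≠ j → d₁ (Sum.inl k) = d (Sum.inl k) := by
      intro k hki hkj
      have := congrArg (fun w : Fin n ⊕ Fin n →₀ ℕ => w (Sum.inl k)) hdu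
      simp only [hd1, hu, hv, Finsupp.add_apply, Finsupp.single_apply] at this ⊢
      simp [Sum.inl.injEq, Ne.symm hki, Ne.symm hkj] at this ⊢
      omega
    unfold meas
    rw [← Finset.add_sum_erase _ _ (Finset.mem_univ i),
      ← Finset.add_sum_erase _ _ (Finset.mem_univ i),
      ← Finset.add_sum_erase _ _ (Finset.mem_erase.mpr ⟨Ne.symm hij, Finset.mem_univ j⟩),
      ← Finset.add_sum_erase _ _ (Finset.mem_erase.mpr ⟨Ne.symm hij, Finset.mem_univ j⟩)]
    have hrest : ∑ k ∈ (Finset.univ.erase i).erase j,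
        ((d₁ (Sum.inl k) : ℤ) - d' (Sum.inl k)).natAbs =
        ∑ k ∈ (Finset.univ.erase i).erase j,
        ((d (Sum.inl k) : ℤ) - d' (Sum.inl k)).natAbs := by
      apply Finset.sum_congr rfl
      intro k hk
      rw [e3 k (Finset.ne_of_mem_erase (Finset.mem_of_mem_erase hk))
        (Finset.ne_of_mem_erase hk)]
    rw [hrest]
    have := e1; have := e2
    omega
  · -- membership
    have hmd : (monomial d (1:K)) = monomial d₀ 1 * monomial u 1 := by
      rw [monomial_mul, one_mul, hdu]
    have hmd1 : (monomial d₁ (1:K)) = monomial d₀ 1 * monomial v 1 := by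
      rw [monomial_mul, one_mul, hd1]
    have hmu : (monomial u (1:K)) = X (Sum.inl i) * X (Sum.inr j) := by
      rw [hu, X, X, monomial_mul, one_mul]
    have hmv : (monomial v (1:K)) = X (Sum.inl j) * X (Sum.inr i) := by
      rw [hv, X, X, monomial_mul, one_mul]
    have key : monomial d (1:K) - monomial d₁ 1 =
        monomial d₀ 1 * (X (Sum.inl i) * X (Sum.inr j) - X (Sum.inl j) * X (Sum.inr i)) := by
      rw [hmd, hmd1, hmu, hmv, mul_sub]
    rw [key]
    apply Ideal.mul_mem_left
    apply Ideal.subset_span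
    right
    exact ⟨i, j, hiT, hjT, hij,
      SimpleGraph.ConnectedComponent.exact hccj.symm, rfl⟩

lemma congr_of_E_eq (N : ℕ) : ∀ d d' : Fin n ⊕ Fin n →₀ ℕ, Good T d → Good T d' →
    E G T d = E G T d' → meas d d' ≤ N →
    (monomial d (1:K) - monomial d' 1) ∈ P K G T := by
  induction N with
  | zero =>
    intro d d' hd hd' hE hm
    have hdd : d = d' := by
      have hz : ∀ k : Fin n, ((d (Sum.inl k) : ℤ) - d' (Sum.inl k)).natAbs = 0 := by
        intro k
        have : meas d d' = 0 := Nat.le_zero.mp hm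
        unfold meas at this
        exact Finset.sum_eq_zero_iff.mp this k (Finset.mem_univ k)
      ext a
      rcases a with k | k
      · have := hz k; omega
      · have h1 := congrArg (fun e => e (Sum.inl k)) hE
        simp only [E_apply_inl] at h1
        have := hz k
        omega
    rw [hdd, sub_self]
    exact Ideal.zero_mem _
  | succ N ih =>
    intro d d' hd hd' hE hm
    by_cases hdd : d = d'
    · rw [hdd, sub_self]; exact Ideal.zero_mem _
    · have : ∃ k : Fin n, d (Sum.inl k) ≠ d' (Sum.inl k) := by
        by_contra h
        push_neg at h
        apply hdd
        ext a
        rcases a with k | k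
        · exact h k
        · have h1 := congrArg (fun e => e (Sum.inl k)) hE
          simp only [E_apply_inl] at h1
          have := h k
          omega
      obtain ⟨k, hk⟩ := this
      rcases Nat.lt_or_ge (d' (Sum.inl k)) (d (Sum.inl k)) with h | h
      · obtain ⟨d₁, hG1, hE1, hm1, hmem⟩ := swap_step K d d' hd hd' hE k h
        have h2 : (monomial d₁ (1:K) - monomial d' 1) ∈ P K G T := by
          apply ih d₁ d' hG1 hd' (hE1.trans hE)
          omega
        have : monomial d (1:K) - monomial d' 1 =
            (monomial d 1 - monomial d₁ 1) + (monomial d₁ 1 - monomial d' 1) := by ring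
        rw [this]
        exact Ideal.add_mem _ hmem h2
      · have h' : d (Sum.inl k) < d' (Sum.inl k) := by omega
        obtain ⟨d₁, hG1, hE1, hm1, hmem⟩ := swap_step K d' d hd' hd hE.symm k h'
        have h2 : (monomial d (1:K) - monomial d₁ 1) ∈ P K G T := by
          apply ih d d₁ hd hG1 (hE.trans hE1.symm)
          have := meas_comm d d'
          have := meas_comm d₁ d'
          have hm1' : meas d₁ d + 2 = meas d' d := hm1
          have := meas_comm d₁ d
          have := meas_comm d' d
          omega
        have : monomial d (1:K) - monomial d' 1 =
            (monomial d 1 - monomial d₁ 1) - (monomial d' 1 - monomial d₁ 1) := by ring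
        rw [this]
        exact Ideal.sub_mem _ h2 hmem

lemma q_monomial_eq (d d' : Fin n ⊕ Fin n →₀ ℕ) (hd : Good T d) (hd' : Good T d')
    (hE : E G T d = E G T d') :
    Ideal.Quotient.mk (P K G T) (monomial d 1) =
      Ideal.Quotient.mk (P K G T) (monomial d' 1) := by
  rw [← sub_eq_zero, ← map_sub, Ideal.Quotient.eq_zero_iff_mem]
  exact congr_of_E_eq K (meas d d') d d' hd hd' hE le_rfl

lemma ker_le_P : RingHom.ker (φ K G T).toRingHom ≤ P K G T := by
  intro f hf
  have hf0 : φ K G T f = 0 := hf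
  rw [← Ideal.Quotient.eq_zero_iff_mem]
  set q := Ideal.Quotient.mk (P K G T) with hq
  set s := f.support.filter (fun d => Good T d) with hs
  have coeffsum : ∀ e : σR G T →₀ ℕ,
      (∑ d ∈ s.filter (fun d => E G T d = e), coeff d f) = 0 := by
    intro e
    have h1 : coeff e (φ K G T f) = ∑ d ∈ s.filter (fun d => E G T d = e), coeff d f := by
      conv_lhs => rw [f.as_sum, map_sum]
      rw [coeff_sum]
      rw [← Finset.sum_filter_add_sum_filter_not f.support (fun d => Good T d)]
      have hbad : ∑ d ∈ f.support.filter (fun d => ¬ Good T d),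
          coeff e (φ K G T (monomial d (coeff d f))) = 0 := by
        apply Finset.sum_eq_zero
        intro d hd
        rw [phi_monomial_bad K d (Finset.mem_filter.mp hd).2]
        simp
      rw [hbad, add_zero, ← hs]
      have hgood : ∀ d ∈ s, coeff e (φ K G T (monomial d (coeff d f))) =
          if E G T d = e then coeff d f else 0 := by
        intro d hd
        rw [phi_monomial_good' K d (Finset.mem_filter.mp hd).2, coeff_monomial]
      rw [Finset.sum_congr rfl hgood]
      exact (Finset.sum_filter _ _).symm
    rw [hf0] at h1
    simpa using h1.symm
  have hqf : q f = ∑ d ∈ s, q (monomial d (coeff d f)) := by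
    conv_lhs => rw [f.as_sum, map_sum]
    rw [← Finset.sum_filter_add_sum_filter_not f.support (fun d => Good T d), ← hs]
    have hbad : ∑ d ∈ f.support.filter (fun d => ¬ Good T d),
        q (monomial d (coeff d f)) = 0 := by
      apply Finset.sum_eq_zero
      intro d hd
      rw [hq, Ideal.Quotient.eq_zero_iff_mem]
      exact monomial_bad_mem K d (Finset.mem_filter.mp hd).2 _
    rw [hbad, add_zero]
  rw [hqf, ← Finset.sum_fiberwise_of_maps_to (g := E G T) (t := s.image (E G T))
    (fun d hd => Finset.mem_image_of_mem _ hd)]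
  apply Finset.sum_eq_zero
  intro e he
  obtain ⟨d₀, hd₀s, hd₀e⟩ := Finset.mem_image.mp he
  have hterm : ∀ d ∈ s.filter (fun d => E G T d = e),
      q (monomial d (coeff d f)) = q (C (coeff d f)) * q (monomial d₀ 1) := by
    intro d hd
    obtain ⟨hds, hde⟩ := Finset.mem_filter.mp hd
    have : (monomial d (coeff d f) : MvPolynomial (Fin n ⊕ Fin n) K) =
        C (coeff d f) * monomial d 1 := by
      rw [C_mul_monomial, mul_one]
    rw [this, map_mul,
      q_monomial_eq K d d₀ (Finset.mem_filter.mp hds).2 (Finset.mem_filter.mp hd₀s).2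
        (by rw [hde, hd₀e])]
  rw [Finset.sum_congr rfl hterm, ← Finset.sum_mul]
  have : (∑ d ∈ s.filter (fun d => E G T d = e), q (C (coeff d f))) = 0 := by
    rw [← map_sum, ← map_sum, coeffsum]
    simp
  rw [this, zero_mul]

end

end Stmt12Aux

theorem stmt12 (K : Type) [Field K] (n : ℕ) (G : SimpleGraph (Fin n)) (T : Set (Fin n)) :
    (Ideal.span
      ({f | ∃ i ∈ T, f = X (Sum.inl i) ∨ f = X (Sum.inr i)} ∪
       {f | ∃ i j : Fin n, i ∉ T ∧ j ∉ T ∧ i ≠ j ∧ (restrictOutside G T).Reachable i j ∧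
          f = X (Sum.inl i) * X (Sum.inr j) - X (Sum.inl j) * X (Sum.inr i)} :
        Set (MvPolynomial (Fin n ⊕ Fin n) K))).IsPrime := by
  
  have h : Stmt12Aux.P K G T = RingHom.ker (Stmt12Aux.φ K G T).toRingHom :=
    le_antisymm (Stmt12Aux.P_le_ker K) (Stmt12Aux.ker_le_P K)
  show (Stmt12Aux.P K G T).IsPrime
  rw [h]
  exact RingHom.ker_isPrime _
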